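/- arXiv:1803.07812 — 3 statements merged into one kernel-verified Lean document; each statement's English description precedes it below -/
import Mathlib

section
/- For a uniformly distributed P_b on [0, P_b^max] and exponential |h_bb|² with mean λ_bb, the outage probability δ = P[Q/(φ P_b |h_bb|² + σ_b²) ≤ 2^R − 1] equals e^{−η} + η·Ei(−η), where η = (Q − (2^R−1)σ_b²)/((2^R−1) λ_bb φ P_b^max), assuming Q > (2^R−1)σ_b². -/
open Real MeasureTheory

/-- Exponential integral Ei(x) = −∫_{−x}^∞ e^{−t}/t dt (valid for x < 0). -/
noncomputable def Ei (x : ℝ) : ℝ := -∫ t in Set.Ioi (-x), Real.exp (-t) / t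

section OutageAux
open Real MeasureTheory Set Filter Topology

lemma integrable_exp_div_pow (η : ℝ) (hη : 0 < η) (n : ℕ) :
    IntegrableOn (fun t => Real.exp (-t) / t ^ n) (Set.Ioi η) := by
  apply Integrable.mono' (g := fun t => Real.exp (-t) * (η ^ n)⁻¹)
  · have : IntegrableOn (fun t => Real.exp (-1 * t)) (Set.Ioi η) :=
      exp_neg_integrableOn_Ioi η one_pos
    simpa [neg_one_mul] using this.mul_const (η ^ n)⁻¹
  · exact ((Real.continuous_exp.comp continuous_neg).measurable.div
      (measurable_id.pow_const n)).aestronglyMeasurable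
  · rw [ae_restrict_iff' measurableSet_Ioi]
    filter_upwards with t ht
    have ht0 : 0 < t := hη.trans ht
    rw [Real.norm_eq_abs, abs_of_nonneg (by positivity), ← div_eq_mul_inv]
    exact div_le_div_of_nonneg_left (Real.exp_pos _).le (pow_pos hη n)
      (pow_le_pow_left₀ hη.le ht.le n)

lemma exp_integral_Ici (a lam : ℝ) (hlam : 0 < lam) :
    ∫ x in Set.Ici a, Real.exp (-x / lam) / lam = Real.exp (-a / lam) := by
  rw [MeasureTheory.integral_Ici_eq_integral_Ioi]
  have hderiv : ∀ x ∈ Set.Ioi a, HasDerivAt (fun x => -Real.exp (-x / lam))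
      (Real.exp (-x / lam) / lam) x := by
    intro x _
    have h1 : HasDerivAt (fun x : ℝ => -x / lam) (-1 / lam) x := by
      simpa using ((hasDerivAt_id x).neg.div_const lam)
    have : HasDerivAt (fun x => -Real.exp (-x / lam)) (-(Real.exp (-x / lam) * (-1 / lam))) x :=
      (h1.exp).neg
    convert this using 1
    ring
  have hint : IntegrableOn (fun x => Real.exp (-x / lam) / lam) (Set.Ioi a) := by
    have : IntegrableOn (fun x => Real.exp (-lam⁻¹ * x)) (Set.Ioi a) :=
      exp_neg_integrableOn_Ioi a (by positivity)
    exact IntegrableOn.congr_fun (this.div_const lam)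
      (fun x _ => by rw [neg_mul, inv_mul_eq_div, neg_div]) measurableSet_Ioi
  have htend : Tendsto (fun x => -Real.exp (-x / lam)) atTop (𝓝 (-0)) := by
    apply Tendsto.neg
    apply Real.tendsto_exp_atBot.comp
    apply Tendsto.atBot_div_const hlam
    exact tendsto_neg_atBot_iff.mpr tendsto_id
  have := integral_Ioi_of_hasDerivAt_of_tendsto
    ((Real.continuous_exp.comp (continuous_id.neg.div_const lam)).neg.continuousWithinAt)
    hderiv hint htend
  rw [this]; simp [Function.comp, div_eq_mul_inv]

lemma parts (η : ℝ) (hη : 0 < η) :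
    ∫ t in Set.Ioi η, Real.exp (-t) / t ^ 2
      = Real.exp (-η) / η - ∫ t in Set.Ioi η, Real.exp (-t) / t := by
  have hderiv : ∀ t ∈ Set.Ioi η, HasDerivAt (fun t => -Real.exp (-t) / t)
      (Real.exp (-t) / t + Real.exp (-t) / t ^ 2) t := by
    intro t ht
    have ht0 : t ≠ 0 := (hη.trans ht).ne'
    have h1 : HasDerivAt (fun t : ℝ => -Real.exp (-t)) (Real.exp (-t)) t := by
      exact (((hasDerivAt_neg t).exp).neg).congr_deriv (by ring)
    have : HasDerivAt (fun t => -Real.exp (-t) / t)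
        ((Real.exp (-t) * t - -Real.exp (-t) * 1) / t ^ 2) t := h1.div (hasDerivAt_id t) ht0
    convert this using 1
    field_simp
    ring
  have h1 := integrable_exp_div_pow η hη 1
  have h2 := integrable_exp_div_pow η hη 2
  simp only [pow_one] at h1
  have hint : IntegrableOn (fun t => Real.exp (-t) / t + Real.exp (-t) / t ^ 2)
      (Set.Ioi η) := h1.add h2
  have htend : Tendsto (fun t => -Real.exp (-t) / t) atTop (𝓝 0) := by
    have : Tendsto (fun t : ℝ => Real.exp (-t) * t⁻¹) atTop (𝓝 (0 * 0)) := by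
      apply Tendsto.mul _ tendsto_inv_atTop_zero
      exact Real.tendsto_exp_atBot.comp (tendsto_neg_atBot_iff.mpr tendsto_id)
    have h0 : Tendsto (fun t : ℝ => -(Real.exp (-t) * t⁻¹)) atTop (𝓝 (-(0*0))) := this.neg
    simpa [neg_div, div_eq_mul_inv] using h0
  have key := integral_Ioi_of_hasDerivAt_of_tendsto (a := η)
    (f := fun t => -Real.exp (-t) / t)
    ((((Real.continuous_exp.comp continuous_neg).neg.continuousAt).div
      continuousAt_id hη.ne').continuousWithinAt) hderiv hint htend
  rw [MeasureTheory.integral_add h1 h2] at key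
  simp only [zero_sub, neg_div, neg_neg] at key
  linarith [key]

lemma image_div (c P : ℝ) (hc : 0 < c) (hP : 0 < P) :
    (fun t => c / t) '' Set.Ioi (c / P) = Set.Ioo 0 P := by
  have hcP : 0 < c / P := div_pos hc hP
  ext y
  constructor
  · rintro ⟨t, ht, rfl⟩
    have ht0 : 0 < t := hcP.trans ht
    constructor
    · positivity
    · calc c / t < c / (c / P) := by
            exact div_lt_div_of_pos_left hc hcP ht
        _ = P := by field_simp
  · rintro ⟨hy0, hyP⟩
    refine ⟨c / y, ?_, by field_simp⟩
    rw [Set.mem_Ioi]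
    rw [div_lt_div_iff₀ hP hy0]
    exact (mul_lt_mul_iff_right₀ hc).mpr hyP

lemma cov (c P : ℝ) (hc : 0 < c) (hP : 0 < P) :
    ∫ y in Set.Ioo 0 P, Real.exp (-(c / y))
      = c * ∫ t in Set.Ioi (c / P), Real.exp (-t) / t ^ 2 := by
  have hcP : 0 < c / P := div_pos hc hP
  rw [← image_div c P hc hP]
  rw [integral_image_eq_integral_abs_deriv_smul measurableSet_Ioi
    (f' := fun t => -c / t ^ 2)
    (fun t ht => by
      have ht0 : t ≠ 0 := (hcP.trans ht).ne'
      have : HasDerivAt (fun t : ℝ => c / t) (-c / t ^ 2) t := by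
        simpa [div_eq_mul_inv, mul_comm] using (hasDerivAt_inv ht0).const_mul c
      exact this.hasDerivWithinAt)
    (fun t₁ h₁ t₂ h₂ he => by
      have h₁0 : t₁ ≠ 0 := (hcP.trans h₁).ne'
      have h₂0 : t₂ ≠ 0 := (hcP.trans h₂).ne'
      field_simp at he
      exact he.symm)
    (fun y => Real.exp (-(c / y)))]
  rw [← MeasureTheory.integral_const_mul]
  apply MeasureTheory.setIntegral_congr_fun measurableSet_Ioi
  intro t ht
  have ht0 : 0 < t := hcP.trans ht
  have h1 : c / (c / t) = t := by field_simp
  simp only [smul_eq_mul, h1]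
  rw [abs_div, abs_neg, abs_of_pos hc, abs_of_pos (by positivity : (0:ℝ) < t ^ 2)]
  ring

end OutageAux

/-- Outage probability: with P_b ~ Uniform[0,P_b^max] and |h_bb|² ~ Exp(mean λ_bb)
independent, δ = P[Q/(φ P_b |h_bb|² + σ_b²) ≤ 2^R − 1]
  = (1/P^max)∫₀^{P^max} P[|h_bb|² ≥ c/(φ y)] dy, c = (Q−(2^R−1)σ_b²)/((2^R−1)λ_bb φ)·λ_bb·φ,
equals e^{−η} + η·Ei(−η) with η = (Q−(2^R−1)σ_b²)/((2^R−1) λ_bb φ P_b^max). -/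
theorem outage_probability (Q R σb2 lam φ Pmax : ℝ)
    (hQ : 0 < Q) (hR : 0 < R) (hσ : 0 < σb2) (hlam : 0 < lam)
    (hφ0 : 0 < φ) (hφ1 : φ ≤ 1) (hP : 0 < Pmax)
    (hcov : (2 ^ R - 1) * σb2 < Q) :
    (1 / Pmax) * ∫ y in (0:ℝ)..Pmax,
        (∫ x in Set.Ici ((Q - (2 ^ R - 1) * σb2) / ((2 ^ R - 1) * φ * y)),
          Real.exp (-x / lam) / lam)
      = Real.exp (-((Q - (2 ^ R - 1) * σb2) / ((2 ^ R - 1) * lam * φ * Pmax)))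
        + ((Q - (2 ^ R - 1) * σb2) / ((2 ^ R - 1) * lam * φ * Pmax))
          * Ei (-((Q - (2 ^ R - 1) * σb2) / ((2 ^ R - 1) * lam * φ * Pmax))) := by
  have hk : 0 < (2:ℝ) ^ R - 1 := by
    have : (1:ℝ) < 2 ^ R := (Real.one_lt_rpow_iff_of_pos two_pos).mpr (Or.inl ⟨one_lt_two, hR⟩)
    linarith
  set k := (2:ℝ) ^ R - 1 with hkdef
  have hnum : 0 < Q - k * σb2 := by linarith
  set c := (Q - k * σb2) / (k * φ * lam) with hcdef
  have hc : 0 < c := by positivity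
  set η := (Q - k * σb2) / (k * lam * φ * Pmax) with hηdef
  have hη : 0 < η := by positivity
  have hηeq : c / Pmax = η := by
    rw [hcdef, hηdef, div_div]; congr 1; ring
  rw [intervalIntegral.integral_of_le hP.le, MeasureTheory.integral_Ioc_eq_integral_Ioo]
  rw [MeasureTheory.setIntegral_congr_fun measurableSet_Ioo
    (g := fun y => Real.exp (-(c / y)))
    (fun y hy => by
      rw [exp_integral_Ici _ _ hlam]
      congr 1
      rw [hcdef, neg_div, div_div, div_div]
      congr 2
      ring)]
  rw [cov c Pmax hc hP, hηeq, parts η hη]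
  rw [Ei, neg_neg]
  have hceq : c = η * Pmax := by
    rw [← hηeq]; field_simp
  rw [hceq]
  field_simp
  ring
end

section
/- Let α(τ) and β(τ) denote the false alarm and miss detection rates of the radiometer, with α given piecewise as in the conventional CIPC scheme and β(τ) = 1 − (Qλ_aw/(P λ_ab g))·ln(1 + Pg/(τ + Qλ_aw/λ_ab − ν)) for τ > ν, where ν = Pg + σ². Then the total error ξ(τ) = α(τ) + β(τ) attains its minimum over τ ∈ ℝ at τ* = ν, with minimum value ξ* = 1 − (Qλ_aw/(P λ_ab g))·ln(1 + P λ_ab g/(Q λ_aw)). -/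
open Real

/-- Conventional CIPC: the total error probability ξ(τ) (piecewise as derived)
is minimized over all τ at τ* = ν = P g + σ², with minimum value
ξ* = 1 − (Qλ_aw/(P λ_ab g))·ln(1 + P λ_ab g/(Q λ_aw)). -/
theorem optimal_threshold (P g σ2 Q lam_aw lam_ab : ℝ)
    (hP : 0 < P) (hg : 0 < g) (hσ : 0 < σ2) (hQ : 0 < Q)
    (haw : 0 < lam_aw) (hab : 0 < lam_ab)
    (ν : ℝ) (hν : ν = P * g + σ2) (ξ : ℝ → ℝ)
    (hξ : ∀ τ : ℝ, ξ τ =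
      if τ < σ2 then 1
      else if τ ≤ ν then
        1 - (Q * lam_aw / (P * g * lam_ab)) *
          Real.log (1 + (τ - σ2) * lam_ab / (Q * lam_aw))
      else
        1 - (Q * lam_aw / (P * g * lam_ab)) *
          Real.log (1 + P * g / (τ + Q * lam_aw / lam_ab - ν))) :
    (∀ τ : ℝ, ξ ν ≤ ξ τ) ∧
    ξ ν = 1 - (Q * lam_aw / (P * lam_ab * g)) *
      Real.log (1 + P * lam_ab * g / (Q * lam_aw)) := by
  have hA : 0 < Q * lam_aw / (P * g * lam_ab) := by positivity
  have hQaw : 0 < Q * lam_aw := by positivity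
  have hσν : σ2 ≤ ν := by nlinarith
  have hξν : ξ ν = 1 - (Q * lam_aw / (P * g * lam_ab)) *
      Real.log (1 + P * g * lam_ab / (Q * lam_aw)) := by
    rw [hξ, if_neg (by linarith), if_pos le_rfl]
    congr 3
    rw [hν]; ring
  constructor
  · intro τ
    rw [hξν, hξ]
    split_ifs with h1 h2
    · -- ξ τ = 1
      have hlog : 0 ≤ Real.log (1 + P * g * lam_ab / (Q * lam_aw)) := by
        apply Real.log_nonneg; nlinarith [div_nonneg (by positivity : (0:ℝ) ≤ P * g * lam_ab) hQaw.le]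
      nlinarith
    · -- σ2 ≤ τ ≤ ν
      have harg : (τ - σ2) * lam_ab / (Q * lam_aw) ≤ P * g * lam_ab / (Q * lam_aw) := by
        gcongr
        nlinarith
      have hpos1 : 0 < 1 + (τ - σ2) * lam_ab / (Q * lam_aw) := by
        have : 0 ≤ (τ - σ2) * lam_ab / (Q * lam_aw) := by
          apply div_nonneg _ hQaw.le; nlinarith
        linarith
      nlinarith [Real.log_le_log hpos1 (show 1 + (τ - σ2) * lam_ab / (Q * lam_aw) ≤ 1 + P * g * lam_ab / (Q * lam_aw) by linarith)]
    · -- τ > ν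
      have hd : Q * lam_aw / lam_ab ≤ τ + Q * lam_aw / lam_ab - ν := by
        have : ν < τ := lt_of_not_ge h2
        linarith
      have hdpos : 0 < Q * lam_aw / lam_ab := by positivity
      have harg : P * g / (τ + Q * lam_aw / lam_ab - ν) ≤ P * g * lam_ab / (Q * lam_aw) := by
        have h1 : P * g / (τ + Q * lam_aw / lam_ab - ν) ≤ P * g / (Q * lam_aw / lam_ab) := by
          apply div_le_div_of_nonneg_left (by positivity) hdpos hd
        have h2 : P * g / (Q * lam_aw / lam_ab) = P * g * lam_ab / (Q * lam_aw) := by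
          field_simp
        linarith [h2 ▸ h1]
      have hpos1 : 0 < 1 + P * g / (τ + Q * lam_aw / lam_ab - ν) := by
        have : 0 < P * g / (τ + Q * lam_aw / lam_ab - ν) := by
          apply div_pos (by positivity); linarith
        linarith
      nlinarith [Real.log_le_log hpos1 (show 1 + P * g / (τ + Q * lam_aw / lam_ab - ν) ≤ 1 + P * g * lam_ab / (Q * lam_aw) by linarith)]
  · rw [hξν]
    congr 3 <;> ring
end

section
/- Let X ~ Exp(mean λ_aw), Y ~ Exp(mean λ_ab), P_b ~ Uniform[0, P^max], all independent, g > 0. Then P[Q·(X/Y) + P_b·g < P^max·g] = 1 − (Qλ_aw/(P^max g λ_ab))·ln(1 + P^max g λ_ab/(Qλ_aw)). -/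
open Real MeasureTheory

lemma exp_neg_mul_integral (k : ℝ) (hk : 0 < k) :
    ∫ y in Set.Ioi (0:ℝ), Real.exp (-(k * y)) = 1 / k := by
  have h := MeasureTheory.integral_comp_mul_left_Ioi (fun x => Real.exp (-x)) 0 hk
  simp only [mul_zero, integral_exp_neg_Ioi, neg_zero, Real.exp_zero, smul_eq_mul,
    mul_one] at h
  simpa [one_div] using h

lemma inner_integral (c a b : ℝ) (hc : 0 ≤ c) (ha : 0 < a) (hb : 0 < b) :
    (∫ y in Set.Ioi (0:ℝ),
        (1 - Real.exp (-(c * y) / a)) * (Real.exp (-y / b) / b))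
      = 1 - a / (c * b + a) := by
  have hk1 : (0:ℝ) < 1 / b := by positivity
  have hk2 : (0:ℝ) < c / a + 1 / b := by positivity
  have hfun : ∀ y : ℝ, (1 - Real.exp (-(c * y) / a)) * (Real.exp (-y / b) / b)
      = (1 / b) * (Real.exp (-((1 / b) * y)) - Real.exp (-((c / a + 1 / b) * y))) := by
    intro y
    have h1 : -(c * y) / a + -y / b = -((c / a + 1 / b) * y) := by ring
    rw [sub_mul, one_mul, mul_sub]
    congr 1
    · rw [mul_comm, mul_one_div]
      congr 1
      ring
    · rw [div_eq_mul_one_div (Real.exp (-y / b)), ← mul_assoc, ← Real.exp_add, h1,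
        mul_comm]
  simp only [hfun]
  rw [integral_const_mul, integral_sub, exp_neg_mul_integral _ hk1,
    exp_neg_mul_integral _ hk2]
  · have hne : c * b + a ≠ 0 := by positivity
    field_simp
  · simpa only [neg_mul, IntegrableOn] using exp_neg_integrableOn_Ioi 0 hk1
  · simpa only [neg_mul, IntegrableOn] using exp_neg_integrableOn_Ioi 0 hk2

/-- X ~ Exp(mean λ_aw), Y ~ Exp(mean λ_ab), P_b ~ Uniform[0,P^max] independent, g > 0.
P[Q·(X/Y) + P_b·g < P^max·g]
 = (1/P^max)∫₀^{P^max} P[X < ((P^max−p)g/Q)·Y] dp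
 = 1 − (Qλ_aw/(P^max g λ_ab))·ln(1 + P^max g λ_ab/(Qλ_aw)). -/
theorem miss_detection_at_opt_threshold (Q g Pmax lam_aw lam_ab : ℝ)
    (hQ : 0 < Q) (hg : 0 < g) (hP : 0 < Pmax) (haw : 0 < lam_aw) (hab : 0 < lam_ab) :
    (1 / Pmax) * ∫ p in (0:ℝ)..Pmax,
        (∫ y in Set.Ioi (0:ℝ),
          (1 - Real.exp (-(((Pmax - p) * g / Q) * y) / lam_aw)) *
            (Real.exp (-y / lam_ab) / lam_ab))
      = 1 - (Q * lam_aw / (Pmax * g * lam_ab)) *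
          Real.log (1 + Pmax * g * lam_ab / (Q * lam_aw)) := by
  set A : ℝ := g * lam_ab / Q with hA
  have hApos : 0 < A := by positivity
  -- replace inner integral by closed form
  have hcongr : ∀ p ∈ Set.uIcc (0:ℝ) Pmax,
      (∫ y in Set.Ioi (0:ℝ),
          (1 - Real.exp (-(((Pmax - p) * g / Q) * y) / lam_aw)) *
            (Real.exp (-y / lam_ab) / lam_ab))
        = 1 - lam_aw / (A * (Pmax - p) + lam_aw) := by
    intro p hp
    rw [Set.uIcc_of_le hP.le] at hp
    have hc : 0 ≤ (Pmax - p) * g / Q := by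
      have h0 : 0 ≤ Pmax - p := by linarith [hp.2]
      positivity
    rw [inner_integral _ _ _ hc haw hab]
    congr 2
    rw [hA]
    field_simp
  rw [intervalIntegral.integral_congr hcongr]
  -- compute the interval integral via an antiderivative
  have hden : ∀ p ∈ Set.uIcc (0:ℝ) Pmax, 0 < A * (Pmax - p) + lam_aw := by
    intro p hp
    rw [Set.uIcc_of_le hP.le] at hp
    have : 0 ≤ A * (Pmax - p) := mul_nonneg hApos.le (by linarith [hp.2])
    linarith
  have hderiv : ∀ p ∈ Set.uIcc (0:ℝ) Pmax,
      HasDerivAt (fun x => x + (lam_aw / A) * Real.log (A * (Pmax - x) + lam_aw))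
        (1 - lam_aw / (A * (Pmax - p) + lam_aw)) p := by
    intro p hp
    have hu : HasDerivAt (fun x : ℝ => A * (Pmax - x) + lam_aw) (-A) p := by
      have : HasDerivAt (fun x : ℝ => A * (Pmax - x) + lam_aw) (A * (0 - 1)) p :=
        (((hasDerivAt_const p Pmax).sub (hasDerivAt_id p)).const_mul A).add_const lam_aw
      simpa using this
    have hlog := (hu.log (hden p hp).ne')
    have := (hasDerivAt_id p).add (hlog.const_mul (lam_aw / A))
    convert this using 1
    · rfl
    · rfl
    · rfl
    have h1 : (A * (Pmax - p) + lam_aw) ≠ 0 := (hden p hp).ne'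
    field_simp
    ring
  have hcont : ContinuousOn (fun p => 1 - lam_aw / (A * (Pmax - p) + lam_aw))
      (Set.uIcc (0:ℝ) Pmax) := by
    apply ContinuousOn.sub continuousOn_const
    apply ContinuousOn.div continuousOn_const
    · fun_prop
    · intro p hp
      exact (hden p hp).ne'
  rw [intervalIntegral.integral_eq_sub_of_hasDerivAt hderiv
    (hcont.intervalIntegrable)]
  -- final arithmetic
  have h1 : 0 < A * (Pmax - 0) + lam_aw := hden 0 (by simp [Set.uIcc_of_le hP.le, hP.le])
  have hlog1 : A * (Pmax - Pmax) + lam_aw = lam_aw := by ring_nf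
  have key : Real.log (A * (Pmax - 0) + lam_aw) - Real.log lam_aw
      = Real.log (1 + Pmax * g * lam_ab / (Q * lam_aw)) := by
    rw [← Real.log_div h1.ne' haw.ne']
    congr 1
    rw [hA]
    field_simp
    ring
  rw [hlog1]
  have hAeq : lam_aw / A = Q * lam_aw / (g * lam_ab) := by
    rw [hA]; field_simp
  have expand : (Pmax + lam_aw / A * Real.log lam_aw
      - (0 + lam_aw / A * Real.log (A * (Pmax - 0) + lam_aw)))
      = Pmax - (lam_aw / A) *
        (Real.log (A * (Pmax - 0) + lam_aw) - Real.log lam_aw) := by ring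
  rw [expand, key, hAeq]
  field_simp
end
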